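/- For every natural number m ≥ 1, the interval [2/(2m+1), 1] is contained in the set X(m) = { ∑_{n=1}^∞ ε_n/(2m+2)^n : ε_n ∈ {0, 2, 3, ..., 2m+1, 2m+3} for all n }. -/

import Mathlib

/-- The digit set `{0, 2, 3, …, 2m+1, 2m+3}`. -/
def digits (m : ℕ) : Set ℝ :=
  {c | c = 0 ∨ c = 2 * m + 3 ∨ ∃ i : ℕ, 2 ≤ i ∧ i ≤ 2 * m + 1 ∧ c = i}

/-- The generalized Guthrie-Nymann Cantorval `X(m)`. -/
def Xm (m : ℕ) : Set ℝ :=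
  {x | ∃ ε : ℕ → ℝ, (∀ n, ε n ∈ digits m) ∧
    HasSum (fun n => ε n / (2 * m + 2) ^ (n + 1)) x}

/-- n-step approximations to `Xm`. -/
def XA (m : ℕ) : ℕ → Set ℝ
  | 0 => Set.Icc 0 ((2 * m + 3) / (2 * m + 1))
  | n + 1 => {x | ∃ d ∈ digits m, ∃ y ∈ XA m n, x = (d + y) / (2 * m + 2)}

lemma digits_zero (m : ℕ) : (0:ℝ) ∈ digits m := Or.inl rfl

lemma digits_top (m : ℕ) : (2*(m:ℝ)+3) ∈ digits m := Or.inr (Or.inl rfl)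

lemma digits_nat (m : ℕ) {k : ℕ} (h2 : 2 ≤ k) (h3 : k ≤ 2*m+1) : ((k:ℝ)) ∈ digits m :=
  Or.inr (Or.inr ⟨k, h2, h3, rfl⟩)

lemma digits_bounds (m : ℕ) {c : ℝ} (h : c ∈ digits m) : 0 ≤ c ∧ c ≤ 2*(m:ℝ)+3 := by
  rcases h with rfl | rfl | ⟨i, h2, h3, rfl⟩
  · constructor <;> positivity
  · exact ⟨by positivity, le_refl _⟩
  · constructor
    · positivity
    · have : (i:ℝ) ≤ ((2*m+1 : ℕ) : ℝ) := Nat.cast_le.mpr h3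
      push_cast at this
      linarith

lemma digits_finite (m : ℕ) : (digits m).Finite := by
  have : digits m ⊆ (fun i : ℕ => (i:ℝ)) '' (Set.Iic (2*m+3)) := by
    rintro c (rfl | rfl | ⟨i, h2, h3, rfl⟩)
    · exact ⟨0, by simp, by simp⟩
    · exact ⟨2*m+3, by simp, by push_cast; ring⟩
    · exact ⟨i, by simp; omega, rfl⟩
  exact ((Set.finite_Iic _).image _).subset this

lemma XA_main (m : ℕ) (hm : 1 ≤ m) : ∀ n : ℕ,
    (Set.Icc (2/(2*(m:ℝ)+1)) 1 ⊆ XA m n) ∧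
    (∀ z : ℝ, 0 ≤ z → z ≤ 2/(2*(m:ℝ)+1) → (z ∈ XA m n ∨ 1 + z ∈ XA m n)) := by
  have hμ : (1:ℝ) ≤ (m:ℝ) := by exact_mod_cast hm
  have h1 : (0:ℝ) < 2*(m:ℝ)+1 := by linarith
  have hb : (0:ℝ) < 2*(m:ℝ)+2 := by linarith
  have hA0 : (0:ℝ) < 2/(2*(m:ℝ)+1) := by positivity
  have hA1 : 2/(2*(m:ℝ)+1) < 1 := by rw [div_lt_one h1]; linarith
  have hAb : (2*(m:ℝ)+2) * (2/(2*(m:ℝ)+1)) = 2 + 2/(2*(m:ℝ)+1) := by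
    field_simp; ring
  have hc1 : ((2*m+1 : ℕ) : ℝ) = 2*(m:ℝ)+1 := by push_cast; ring
  intro n
  induction n with
  | zero =>
    constructor
    · intro v hv
      simp only [XA]
      constructor
      · linarith [hv.1]
      · have : (1:ℝ) ≤ (2*(m:ℝ)+3)/(2*(m:ℝ)+1) := by
          rw [le_div_iff₀ h1]; linarith
        linarith [hv.2]
    · intro z hz0 hzA
      left
      simp only [XA]
      constructor
      · exact hz0
      · have h' : 2/(2*(m:ℝ)+1) ≤ (2*(m:ℝ)+3)/(2*(m:ℝ)+1) := by
          gcongr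
          linarith
        linarith
  | succ n ih =>
    obtain ⟨ihS1, ihS2⟩ := ih
    constructor
    · -- S1
      intro v hv
      obtain ⟨hv1, hv2⟩ := hv
      have hu1 : 2 + 2/(2*(m:ℝ)+1) ≤ (2*(m:ℝ)+2) * v := by
        nlinarith [mul_le_mul_of_nonneg_left hv1 hb.le]
      have hu2 : (2*(m:ℝ)+2) * v ≤ 2*(m:ℝ)+2 := by nlinarith
      simp only [XA, Set.mem_setOf_eq]
      by_cases hbig : 2*(m:ℝ)+1 + 2/(2*(m:ℝ)+1) ≤ (2*(m:ℝ)+2) * v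
      · refine ⟨2*(m:ℝ)+1, by rw [← hc1]; exact digits_nat m (by omega) (le_refl _),
          (2*(m:ℝ)+2) * v - (2*(m:ℝ)+1), ihS1 ⟨by linarith, by linarith⟩, ?_⟩
        rw [eq_div_iff hb.ne']; ring
      · push_neg at hbig
        set u := (2*(m:ℝ)+2) * v with hu
        set k := ⌊u⌋₊ with hk
        have hu0 : (0:ℝ) ≤ u := by linarith
        have hk1 : (k:ℝ) ≤ u := Nat.floor_le hu0
        have hk2 : u < k + 1 := Nat.lt_floor_add_one u
        have hk3 : 2 ≤ k := by
          have h' : (1:ℝ) < (k:ℝ) := by linarith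
          exact_mod_cast Nat.succ_le_of_lt (by exact_mod_cast h')
        have hk4 : k ≤ 2*m+1 := by
          have h' : (k:ℝ) < ((2*m+2 : ℕ) : ℝ) := by push_cast; linarith
          have := Nat.cast_lt.mp h'
          omega
        rcases le_or_gt (2/(2*(m:ℝ)+1)) (u - k) with hgood | hgap
        · refine ⟨(k:ℝ), digits_nat m hk3 hk4, u - k,
            ihS1 ⟨hgood, by linarith⟩, ?_⟩
          rw [eq_div_iff hb.ne']; rw [hu]; ring
        · have hk5 : 3 ≤ k := by
            have h' : (2:ℝ) < (k:ℝ) := by linarith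
            exact_mod_cast Nat.succ_le_of_lt (by exact_mod_cast h')
          rcases ihS2 (u - k) (by linarith) hgap.le with hL | hR
          · refine ⟨(k:ℝ), digits_nat m hk3 hk4, u - k, hL, ?_⟩
            rw [eq_div_iff hb.ne']; rw [hu]; ring
          · refine ⟨((k-1 : ℕ):ℝ), digits_nat m (by omega) (by omega),
              1 + (u - k), hR, ?_⟩
            rw [Nat.cast_sub (by omega), Nat.cast_one, eq_div_iff hb.ne']
            rw [hu]; ring
    · -- S2
      intro z hz0 hzA
      have hzu : (2*(m:ℝ)+2) * z ≤ 2 + 2/(2*(m:ℝ)+1) := by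
        nlinarith [mul_le_mul_of_nonneg_left hzA hb.le]
      have hzu0 : (0:ℝ) ≤ (2*(m:ℝ)+2) * z := by positivity
      set u := (2*(m:ℝ)+2) * z with hu
      simp only [XA, Set.mem_setOf_eq]
      rcases le_or_gt u (2/(2*(m:ℝ)+1)) with h1c | h1c
      · -- u ∈ [0, A]
        rcases ihS2 u hzu0 h1c with hL | hR
        · left
          exact ⟨0, digits_zero m, u, hL, by rw [eq_div_iff hb.ne', hu]; ring⟩
        · right
          refine ⟨2*(m:ℝ)+1, by rw [← hc1]; exact digits_nat m (by omega) (le_refl _),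
            1 + u, hR, ?_⟩
          rw [eq_div_iff hb.ne', hu]; ring
      · rcases le_or_gt u 1 with h2c | h2c
        · -- u ∈ [A, 1]
          left
          exact ⟨0, digits_zero m, u, ihS1 ⟨h1c.le, h2c⟩,
            by rw [eq_div_iff hb.ne', hu]; ring⟩
        · rcases le_or_gt u (1 + 2/(2*(m:ℝ)+1)) with h3c | h3c
          · -- u ∈ [1, 1+A]
            rcases ihS2 (u - 1) (by linarith) (by linarith) with hL | hR
            · right
              refine ⟨2*(m:ℝ)+3, digits_top m, u - 1, hL, ?_⟩
              rw [eq_div_iff hb.ne', hu]; ring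
            · left
              exact ⟨0, digits_zero m, 1 + (u - 1), hR,
                by rw [eq_div_iff hb.ne', hu]; ring⟩
          · rcases le_or_gt u 2 with h4c | h4c
            · -- u ∈ [1+A, 2]
              right
              refine ⟨2*(m:ℝ)+3, digits_top m, u - 1,
                ihS1 ⟨by linarith, by linarith⟩, ?_⟩
              rw [eq_div_iff hb.ne', hu]; ring
            · -- u ∈ [2, 2+A]
              rcases ihS2 (u - 2) (by linarith) (by linarith) with hL | hR
              · left
                refine ⟨(2:ℝ), ?_, u - 2, hL, by rw [eq_div_iff hb.ne', hu]; ring⟩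
                have : ((2:ℕ):ℝ) = (2:ℝ) := by norm_num
                rw [← this]; exact digits_nat m (le_refl _) (by omega)
              · right
                refine ⟨2*(m:ℝ)+3, digits_top m, 1 + (u - 2), hR, ?_⟩
                rw [eq_div_iff hb.ne', hu]; ring

lemma XA_approx (m : ℕ) : ∀ n : ℕ, ∀ v ∈ XA m n, ∃ ω : ℕ → ℝ,
    (∀ k, ω k ∈ digits m) ∧
    0 ≤ v - ∑ k ∈ Finset.range n, ω k / (2*(m:ℝ)+2)^(k+1) ∧
    v - ∑ k ∈ Finset.range n, ω k / (2*(m:ℝ)+2)^(k+1)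
      ≤ (2*(m:ℝ)+3)/(2*(m:ℝ)+1) / (2*(m:ℝ)+2)^n := by
  have hb : (0:ℝ) < 2*(m:ℝ)+2 := by positivity
  intro n
  induction n with
  | zero =>
    intro v hv
    simp only [XA] at hv
    refine ⟨fun _ => 0, fun _ => digits_zero m, ?_, ?_⟩
    · simpa using hv.1
    · simpa using hv.2
  | succ n ih =>
    intro v hv
    simp only [XA, Set.mem_setOf_eq] at hv
    obtain ⟨d, hd, y, hy, rfl⟩ := hv
    obtain ⟨ω, hω, h0, h1⟩ := ih y hy
    have hsum : ∑ k ∈ Finset.range (n+1),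
        (Nat.casesOn k d ω : ℝ) / (2*(m:ℝ)+2)^(k+1)
        = d/(2*(m:ℝ)+2)
          + (∑ k ∈ Finset.range n, ω k / (2*(m:ℝ)+2)^(k+1))/(2*(m:ℝ)+2) := by
      rw [Finset.sum_range_succ']
      simp only [Finset.sum_div]
      rw [add_comm]
      congr 1
      · norm_num
      · apply Finset.sum_congr rfl
        intro i _
        rw [div_div, ← pow_succ]
    have heq : (d + y) / (2*(m:ℝ)+2) - (d/(2*(m:ℝ)+2)
        + (∑ k ∈ Finset.range n, ω k / (2*(m:ℝ)+2)^(k+1))/(2*(m:ℝ)+2))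
        = (y - ∑ k ∈ Finset.range n, ω k / (2*(m:ℝ)+2)^(k+1))/(2*(m:ℝ)+2) := by
      field_simp
      ring
    refine ⟨fun k => Nat.casesOn k d ω, fun k => by cases k <;> simp [hd, hω], ?_, ?_⟩
    · rw [hsum, heq]
      positivity
    · rw [hsum, heq, pow_succ, ← div_div]
      gcongr

lemma mem_Xm_of_forall_XA (m : ℕ) (hm : 1 ≤ m) (v : ℝ) (h : ∀ n, v ∈ XA m n) :
    v ∈ Xm m := by
  have hb : (0:ℝ) < 2*(m:ℝ)+2 := by positivity
  have h1 : (0:ℝ) < 2*(m:ℝ)+1 := by positivity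
  set M : ℝ := (2*(m:ℝ)+3)/(2*(m:ℝ)+1) with hM
  set V : ℕ → Set (ℕ → ℝ) := fun n =>
    {ω | (∀ k, ω k ∈ digits m) ∧
      0 ≤ v - ∑ k ∈ Finset.range n, ω k / (2*(m:ℝ)+2)^(k+1) ∧
      v - ∑ k ∈ Finset.range n, ω k / (2*(m:ℝ)+2)^(k+1) ≤ M / (2*(m:ℝ)+2)^n}
    with hV
  have hclosed : ∀ n, IsClosed (V n) := by
    intro n
    have hc : Continuous fun ω : ℕ → ℝ =>
        v - ∑ k ∈ Finset.range n, ω k / (2*(m:ℝ)+2)^(k+1) := by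
      apply continuous_const.sub
      apply continuous_finset_sum
      intro k _
      exact (continuous_apply k).div_const _
    have : V n = (⋂ k, (fun ω : ℕ → ℝ => ω k) ⁻¹' digits m) ∩
        ((fun ω : ℕ → ℝ => v - ∑ k ∈ Finset.range n, ω k / (2*(m:ℝ)+2)^(k+1)) ⁻¹'
          Set.Icc 0 (M / (2*(m:ℝ)+2)^n)) := by
      ext ω
      simp only [hV, Set.mem_setOf_eq, Set.mem_inter_iff, Set.mem_iInter,
        Set.mem_preimage, Set.mem_Icc]
    rw [this]
    exact IsClosed.inter
      (isClosed_iInter fun k => (digits_finite m).isClosed.preimage (continuous_apply k))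
      (isClosed_Icc.preimage hc)
  have hne : ∀ n, (V n).Nonempty := by
    intro n
    obtain ⟨ω, hω, h0, h1'⟩ := XA_approx m n v (h n)
    exact ⟨ω, hω, h0, h1'⟩
  have hnested : ∀ n, V (n+1) ⊆ V n := by
    intro n ω hω
    obtain ⟨hd, h0, h1'⟩ := hω
    have hsplit : ∑ k ∈ Finset.range (n+1), ω k / (2*(m:ℝ)+2)^(k+1)
        = ∑ k ∈ Finset.range n, ω k / (2*(m:ℝ)+2)^(k+1) + ω n / (2*(m:ℝ)+2)^(n+1) :=
      Finset.sum_range_succ _ n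
    obtain ⟨hdn0, hdn1⟩ := digits_bounds m (hd n)
    have hpow : (0:ℝ) < (2*(m:ℝ)+2)^(n+1) := by positivity
    have hpown : (0:ℝ) < (2*(m:ℝ)+2)^n := by positivity
    refine ⟨hd, ?_, ?_⟩
    · have : (0:ℝ) ≤ ω n / (2*(m:ℝ)+2)^(n+1) := by positivity
      rw [hsplit] at h0
      linarith
    · have hkey : M / (2*(m:ℝ)+2)^n
          = M / (2*(m:ℝ)+2)^(n+1) + (2*(m:ℝ)+3) / (2*(m:ℝ)+2)^(n+1) := by
        rw [pow_succ]
        rw [← add_div, div_eq_div_iff (by positivity) (by positivity)]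
        rw [hM]
        field_simp
        ring
      have hstep : ω n / (2*(m:ℝ)+2)^(n+1) ≤ (2*(m:ℝ)+3) / (2*(m:ℝ)+2)^(n+1) := by
        gcongr
      rw [hsplit] at h1'
      linarith
  obtain ⟨ω, hω⟩ := IsCompact.nonempty_iInter_of_sequence_nonempty_isCompact_isClosed
    V hnested hne
    (by
      have hpi : IsCompact (Set.pi Set.univ (fun _ : ℕ => digits m)) :=
        isCompact_univ_pi fun _ => (digits_finite m).isCompact
      apply IsCompact.of_isClosed_subset hpi (hclosed 0)
      intro ω hω
      intro k _
      exact hω.1 k)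
    hclosed
  simp only [Set.mem_iInter] at hω
  have hdig : ∀ k, ω k ∈ digits m := (hω 0).1
  refine ⟨ω, hdig, ?_⟩
  have hfnn : ∀ k, (0:ℝ) ≤ ω k / (2*(m:ℝ)+2)^(k+1) := by
    intro k
    have := (digits_bounds m (hdig k)).1
    positivity
  rw [hasSum_iff_tendsto_nat_of_nonneg hfnn]
  have hMb : Filter.Tendsto (fun n : ℕ => M / (2*(m:ℝ)+2)^n) Filter.atTop (nhds 0) := by
    have hr0 : (0:ℝ) ≤ (2*(m:ℝ)+2)⁻¹ := by positivity
    have hr1 : (2*(m:ℝ)+2)⁻¹ < 1 := by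
      rw [inv_lt_one_iff₀]
      right
      linarith
    have := (tendsto_pow_atTop_nhds_zero_of_lt_one hr0 hr1).const_mul M
    simpa [div_eq_mul_inv, inv_pow] using this
  have hlow : Filter.Tendsto (fun n : ℕ => v - M / (2*(m:ℝ)+2)^n) Filter.atTop (nhds v) := by
    simpa using (Filter.Tendsto.const_sub v hMb)
  apply tendsto_of_tendsto_of_tendsto_of_le_of_le hlow tendsto_const_nhds
  · intro n
    have := (hω n).2.2
    linarith
  · intro n
    have := (hω n).2.1
    linarith

theorem Icc_subset_Xm :
    ∀ m : ℕ, 1 ≤ m → Set.Icc (2 / (2 * (m : ℝ) + 1)) 1 ⊆ Xm m := by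
  intro m hm x hx
  exact mem_Xm_of_forall_XA m hm x fun n => (XA_main m hm n).1 hx
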